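/- Let f : ℝ → [0,∞) be right-continuous with left limits, with F₊, F₋, F as above. Then F is countable if and only if F₋ is countable. -/

import Mathlib

open Filter Set

/-- For a càdlàg `f : ℝ → [0,∞)`, with `F₊ = {f = 0}`, `F₋ = {f(·-) = 0}` and
`F = F₊ ∪ F₋`, the set `F` is countable iff `F₋` is countable. -/
theorem zero_set_countable_iff_leftLim_zero_set_countable
    (f : ℝ → ℝ) (hnn : ∀ x, 0 ≤ f x)
    (hrc : ∀ x, ContinuousWithinAt f (Set.Ici x) x)
    (hll : ∀ x, Tendsto f (nhdsWithin x (Set.Iio x)) (nhds (Function.leftLim f x))) :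
    ({x : ℝ | f x = 0} ∪ {x : ℝ | Function.leftLim f x = 0}).Countable ↔
      {x : ℝ | Function.leftLim f x = 0}.Countable := by
  constructor
  · exact fun h => h.mono subset_union_right
  · intro h
    set D : Set ℝ := {x | f x = 0 ∧ Function.leftLim f x ≠ 0} with hD
    have hsub : ({x : ℝ | f x = 0} ∪ {x : ℝ | Function.leftLim f x = 0})
        ⊆ D ∪ {x : ℝ | Function.leftLim f x = 0} := by
      intro x hx
      rcases hx with hx | hx
      · by_cases hl : Function.leftLim f x = 0
        · exact Or.inr hl
        · exact Or.inl ⟨hx, hl⟩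
      · exact Or.inr hx
    refine (Set.Countable.union ?_ h).mono hsub
    have key : ∀ x ∈ D, ∃ q : ℚ, (q : ℝ) < x ∧ ∀ y ∈ Ioo (q : ℝ) x, 0 < f y := by
      intro x hx
      obtain ⟨hfx, hlx⟩ := hx
      have hlnn : 0 ≤ Function.leftLim f x :=
        ge_of_tendsto (hll x) (Eventually.of_forall fun y => hnn y)
      have hlpos : 0 < Function.leftLim f x := lt_of_le_of_ne hlnn (Ne.symm hlx)
      have hev : {y | 0 < f y} ∈ nhdsWithin x (Set.Iio x) :=
        (hll x).eventually (eventually_gt_nhds hlpos)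
      obtain ⟨a, ha, hsub'⟩ := mem_nhdsLT_iff_exists_Ioo_subset.mp hev
      obtain ⟨q, hq1, hq2⟩ := exists_rat_btwn ha.out
      exact ⟨q, hq2, fun y hy => hsub' ⟨lt_trans hq1 hy.1, hy.2⟩⟩
    choose g hg1 hg2 using key
    have hinj : Set.InjOn (fun x : D => g x x.2) Set.univ := by
      rintro ⟨x, hx⟩ - ⟨x', hx'⟩ - hgxx'
      simp only at hgxx'
      rcases lt_trichotomy x x' with hlt | heq | hlt
      · exfalso
        have : 0 < f x := hg2 x' hx' x ⟨hgxx' ▸ hg1 x hx, hlt⟩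
        exact this.ne' hx.1
      · simpa using heq
      · exfalso
        have : 0 < f x' := hg2 x hx x' ⟨hgxx'.symm ▸ hg1 x' hx', hlt⟩
        exact this.ne' hx'.1
    have : Countable D := by
      have := Set.injOn_univ.mp hinj
      exact Function.Injective.countable (β := ℚ) this
    exact Set.countable_coe_iff.mp this
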